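/- The subset T = {(m; a, a+b, b, 0) ∈ H : a, b ∈ ℤ, m + (a+b)/2 ∈ ℤ} is a subgroup of H, and for any g = (m;a,a+b,b,0) and h = (m';a',a'+b',b',0) in T one has the commutation relation g·h = λ^{2(ab'−a'b)}·h·g, where λ = (1;0,0,0,0). (This realizes the small grading group G(𝕋) of the torus, a central extension of ℤ by H₁(T²) with commutation relation gh = λ^{2[g]·[h]}hg, as a subgroup of the big grading group.) -/
import Mathlib


/-- The big grading group `G'` of the torus: tuples `(m; a, b, c, d)` with
`m ∈ ½ℤ` a half-integer and `a, b, c, d ∈ ℤ`. -/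
def BigGr : Type := {x : ℚ × ℤ × ℤ × ℤ × ℤ // ∃ n : ℤ, x.1 = (n : ℚ) / 2}

namespace BigGr

/-- The Maslov component. -/
def m (x : BigGr) : ℚ := x.1.1

/-- The first spin-c component. -/
def a (x : BigGr) : ℤ := x.1.2.1

/-- The second spin-c component. -/
def b (x : BigGr) : ℤ := x.1.2.2.1

/-- The third spin-c component. -/
def c (x : BigGr) : ℤ := x.1.2.2.2.1

/-- The fourth spin-c component. -/
def d (x : BigGr) : ℤ := x.1.2.2.2.2

/-- Construct an element `(m; a, b, c, d)` of the big grading group. -/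
def mk (m₀ : ℚ) (a₀ b₀ c₀ d₀ : ℤ) (h : ∃ n : ℤ, m₀ = (n : ℚ) / 2) : BigGr :=
  ⟨(m₀, a₀, b₀, c₀, d₀), h⟩

/-- The multiplication
`(m;a,b,c,d)·(m';a',b',c',d') = (m+m'+½|a b;a' b'|+½|b c;b' c'|+½|c d;c' d'|+½|d a;d' a'|;
a+a', b+b', c+c', d+d')`. -/
def bmul (x y : BigGr) : BigGr :=
  ⟨(x.m + y.m + ((x.a * y.b - y.a * x.b : ℤ) : ℚ) / 2 + ((x.b * y.c - y.b * x.c : ℤ) : ℚ) / 2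
      + ((x.c * y.d - y.c * x.d : ℤ) : ℚ) / 2 + ((x.d * y.a - y.d * x.a : ℤ) : ℚ) / 2,
    x.a + y.a, x.b + y.b, x.c + y.c, x.d + y.d), by
      obtain ⟨n, hn⟩ := x.2
      obtain ⟨n', hn'⟩ := y.2
      have hm : x.m = (n : ℚ) / 2 := hn
      have hm' : y.m = (n' : ℚ) / 2 := hn'
      refine ⟨n + n' + (x.a * y.b - y.a * x.b) + (x.b * y.c - y.b * x.c)
        + (x.c * y.d - y.c * x.d) + (x.d * y.a - y.d * x.a), ?_⟩
      dsimp only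
      rw [hm, hm']
      push_cast
      ring⟩

/-- The identity element `(0;0,0,0,0)`. -/
def bone : BigGr := ⟨(0, 0, 0, 0, 0), ⟨0, by norm_num⟩⟩

/-- The inverse `(−m;−a,−b,−c,−d)` of `(m;a,b,c,d)`. -/
def binv (x : BigGr) : BigGr :=
  ⟨(-x.m, -x.a, -x.b, -x.c, -x.d), by
    obtain ⟨n, hn⟩ := x.2
    have hm : x.m = (n : ℚ) / 2 := hn
    refine ⟨-n, ?_⟩
    dsimp only
    rw [hm]
    push_cast
    ring⟩

theorem bmul_assoc (x y z : BigGr) : bmul (bmul x y) z = bmul x (bmul y z) := by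
  obtain ⟨⟨m₁, a₁, b₁, c₁, d₁⟩, h₁⟩ := x
  obtain ⟨⟨m₂, a₂, b₂, c₂, d₂⟩, h₂⟩ := y
  obtain ⟨⟨m₃, a₃, b₃, c₃, d₃⟩, h₃⟩ := z
  apply Subtype.ext
  simp only [bmul, m, a, b, c, d, Prod.mk.injEq]
  refine ⟨?_, ?_, ?_, ?_, ?_⟩ <;> push_cast <;> ring

theorem bone_mul (x : BigGr) : bmul bone x = x := by
  obtain ⟨⟨m₁, a₁, b₁, c₁, d₁⟩, h₁⟩ := x
  apply Subtype.ext
  simp only [bmul, bone, m, a, b, c, d, Prod.mk.injEq]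
  refine ⟨?_, ?_, ?_, ?_, ?_⟩ <;> push_cast <;> ring

theorem bmul_one (x : BigGr) : bmul x bone = x := by
  obtain ⟨⟨m₁, a₁, b₁, c₁, d₁⟩, h₁⟩ := x
  apply Subtype.ext
  simp only [bmul, bone, m, a, b, c, d, Prod.mk.injEq]
  refine ⟨?_, ?_, ?_, ?_, ?_⟩ <;> push_cast <;> ring

theorem binv_mul_cancel (x : BigGr) : bmul (binv x) x = bone := by
  obtain ⟨⟨m₁, a₁, b₁, c₁, d₁⟩, h₁⟩ := x
  apply Subtype.ext
  simp only [bmul, bone, binv, m, a, b, c, d, Prod.mk.injEq]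
  refine ⟨?_, ?_, ?_, ?_, ?_⟩ <;> push_cast <;> ring

instance instGroup : Group BigGr where
  mul := bmul
  one := bone
  inv := binv
  mul_assoc := bmul_assoc
  one_mul := bone_mul
  mul_one := bmul_one
  inv_mul_cancel := binv_mul_cancel

theorem mul_def (x y : BigGr) : x * y = bmul x y := rfl

theorem one_def : (1 : BigGr) = bone := rfl

theorem inv_def (x : BigGr) : x⁻¹ = binv x := rfl

/-- The distinguished central element `λ = (1;0,0,0,0)`. -/
def lam : BigGr := mk 1 0 0 0 0 ⟨2, by norm_num⟩

/-- The weight grading element `λ_w = (1;1,1,1,1)`. -/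
def lamw : BigGr := mk 1 1 1 1 1 ⟨2, by norm_num⟩

/-- The grading `gr'(U) = (−1;1,1,1,1)` of the variable `U`. -/
def grU : BigGr := mk (-1) 1 1 1 1 ⟨-2, by norm_num⟩

/-- `gr'(ρ₁) = (−1/2;1,0,0,0)`. -/
def grRho1 : BigGr := mk (-1/2) 1 0 0 0 ⟨-1, by norm_num⟩

/-- `gr'(ρ₂) = (−1/2;0,1,0,0)`. -/
def grRho2 : BigGr := mk (-1/2) 0 1 0 0 ⟨-1, by norm_num⟩

/-- `gr'(ρ₃) = (−1/2;0,0,1,0)`. -/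
def grRho3 : BigGr := mk (-1/2) 0 0 1 0 ⟨-1, by norm_num⟩

/-- `gr'(ρ₄) = (−1/2;0,0,0,1)`. -/
def grRho4 : BigGr := mk (-1/2) 0 0 0 1 ⟨-1, by norm_num⟩

/-- The anti-automorphism `r'(m;a,b,c,d) = (m;−c,−b,−a,−d)`. -/
def rprime (x : BigGr) : BigGr := ⟨(x.m, -x.c, -x.b, -x.a, -x.d), x.2⟩

end BigGr

/-- The subset `T = {(m; a, a+b, b, 0) : a, b ∈ ℤ, m + (a+b)/2 ∈ ℤ}` of the big grading
group, which realizes the small grading group `G(𝕋)` of the torus. -/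
def smallT : Set BigGr :=
  {x : BigGr | x.b = x.a + x.c ∧ x.d = 0 ∧ ∃ k : ℤ, x.m + ((x.a + x.c : ℤ) : ℚ) / 2 = (k : ℚ)}

namespace BigGr

theorem mk_m (m₀ : ℚ) (a₀ b₀ c₀ d₀ : ℤ) (h) : (mk m₀ a₀ b₀ c₀ d₀ h).m = m₀ := rfl
theorem mk_a (m₀ : ℚ) (a₀ b₀ c₀ d₀ : ℤ) (h) : (mk m₀ a₀ b₀ c₀ d₀ h).a = a₀ := rfl
theorem mk_b (m₀ : ℚ) (a₀ b₀ c₀ d₀ : ℤ) (h) : (mk m₀ a₀ b₀ c₀ d₀ h).b = b₀ := rfl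
theorem mk_c (m₀ : ℚ) (a₀ b₀ c₀ d₀ : ℤ) (h) : (mk m₀ a₀ b₀ c₀ d₀ h).c = c₀ := rfl
theorem mk_d (m₀ : ℚ) (a₀ b₀ c₀ d₀ : ℤ) (h) : (mk m₀ a₀ b₀ c₀ d₀ h).d = d₀ := rfl

theorem mul_m (x y : BigGr) : (x * y).m =
    x.m + y.m + ((x.a * y.b - y.a * x.b : ℤ) : ℚ) / 2 + ((x.b * y.c - y.b * x.c : ℤ) : ℚ) / 2
      + ((x.c * y.d - y.c * x.d : ℤ) : ℚ) / 2 + ((x.d * y.a - y.d * x.a : ℤ) : ℚ) / 2 := rfl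

theorem mul_a (x y : BigGr) : (x * y).a = x.a + y.a := rfl
theorem mul_b (x y : BigGr) : (x * y).b = x.b + y.b := rfl
theorem mul_c (x y : BigGr) : (x * y).c = x.c + y.c := rfl
theorem mul_d (x y : BigGr) : (x * y).d = x.d + y.d := rfl

theorem inv_m (x : BigGr) : x⁻¹.m = -x.m := rfl
theorem inv_a (x : BigGr) : x⁻¹.a = -x.a := rfl
theorem inv_b (x : BigGr) : x⁻¹.b = -x.b := rfl
theorem inv_c (x : BigGr) : x⁻¹.c = -x.c := rfl
theorem inv_d (x : BigGr) : x⁻¹.d = -x.d := rfl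

theorem one_m : (1 : BigGr).m = 0 := rfl
theorem one_a : (1 : BigGr).a = 0 := rfl
theorem one_b : (1 : BigGr).b = 0 := rfl
theorem one_c : (1 : BigGr).c = 0 := rfl
theorem one_d : (1 : BigGr).d = 0 := rfl

theorem ext' {x y : BigGr} (hm : x.m = y.m) (ha : x.a = y.a) (hb : x.b = y.b)
    (hc : x.c = y.c) (hd : x.d = y.d) : x = y := by
  apply Subtype.ext
  obtain ⟨⟨m₁, a₁, b₁, c₁, d₁⟩, h₁⟩ := x
  obtain ⟨⟨m₂, a₂, b₂, c₂, d₂⟩, h₂⟩ := y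
  simp only [m, a, b, c, d] at hm ha hb hc hd
  simp [hm, ha, hb, hc, hd]

theorem lam_pow (n : ℕ) : lam ^ n = mk (n : ℚ) 0 0 0 0 ⟨2 * n, by push_cast; ring⟩ := by
  induction n with
  | zero =>
    apply ext' <;> simp [mk_m, mk_a, mk_b, mk_c, mk_d, one_m, one_a, one_b, one_c, one_d]
  | succ k ih =>
    rw [pow_succ, ih]
    apply ext' <;>
      simp only [mul_m, mul_a, mul_b, mul_c, mul_d, lam, mk_m, mk_a, mk_b, mk_c, mk_d] <;>
      push_cast <;> ring

theorem lam_zpow (n : ℤ) : lam ^ n = mk (n : ℚ) 0 0 0 0 ⟨2 * n, by push_cast; ring⟩ := by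
  cases n with
  | ofNat k =>
    rw [Int.ofNat_eq_coe, zpow_natCast, lam_pow]
    apply ext' <;> simp [mk_m, mk_a, mk_b, mk_c, mk_d]
  | negSucc k =>
    rw [zpow_negSucc, lam_pow]
    apply ext' <;>
      simp only [inv_m, inv_a, inv_b, inv_c, inv_d, mk_m, mk_a, mk_b, mk_c, mk_d] <;>
      push_cast <;> ring

end BigGr

/-- `T` is a subgroup of the big grading group, and for
`g = (m;a,a+b,b,0)`, `h = (m';a',a'+b',b',0)` in `T` one has the commutation relation
`g·h = λ^{2(ab'−a'b)}·h·g`. -/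
theorem statement7 :
    (∃ S : Subgroup BigGr, (S : Set BigGr) = smallT) ∧
    (∀ g h : BigGr, g ∈ smallT → h ∈ smallT →
      g * h = BigGr.lam ^ (2 * (g.a * h.c - h.a * g.c)) * (h * g)) := by
  constructor
  · refine ⟨{ carrier := smallT, mul_mem' := ?_, one_mem' := ?_, inv_mem' := ?_ }, rfl⟩
    · rintro x y ⟨hbx, hdx, kx, hkx⟩ ⟨hby, hdy, ky, hky⟩
      refine ⟨?_, ?_, kx + ky + x.a * y.c - y.a * x.c, ?_⟩
      · simp [BigGr.mul_a, BigGr.mul_b, BigGr.mul_c, hbx, hby]; ring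
      · simp [BigGr.mul_d, hdx, hdy]
      · simp only [BigGr.mul_m, BigGr.mul_a, BigGr.mul_c, hbx, hby, hdx, hdy]
        push_cast
        push_cast at hkx hky
        linarith
    · exact ⟨by simp [BigGr.one_a, BigGr.one_b, BigGr.one_c], by simp [BigGr.one_d],
        0, by simp [BigGr.one_m, BigGr.one_a, BigGr.one_c]⟩
    · rintro x ⟨hbx, hdx, kx, hkx⟩
      refine ⟨?_, ?_, -kx, ?_⟩
      · simp [BigGr.inv_a, BigGr.inv_b, BigGr.inv_c, hbx]; ring
      · simp [BigGr.inv_d, hdx]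
      · simp only [BigGr.inv_m, BigGr.inv_a, BigGr.inv_c]
        push_cast
        push_cast at hkx
        linarith
  · rintro g h ⟨hbg, hdg, _⟩ ⟨hbh, hdh, _⟩
    rw [BigGr.lam_zpow]
    apply BigGr.ext' <;>
      simp only [BigGr.mul_m, BigGr.mul_a, BigGr.mul_b, BigGr.mul_c, BigGr.mul_d,
        BigGr.mk_m, BigGr.mk_a, BigGr.mk_b, BigGr.mk_c, BigGr.mk_d, hbg, hbh, hdg, hdh] <;>
      push_cast <;> ring
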